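/- Let C ≥ 2 and let p, r : Fin C → ℝ be probability vectors such that for every i, |r i - 1/C| ≤ |p i - 1/C| and r i - 1/C and p i - 1/C have the same sign (i.e. r i lies between p i and 1/C). Then H(p) ≤ H(r), where H denotes Shannon entropy. -/
import Mathlib


/-- Schur-type monotonicity: if every coordinate of `r` lies between the
corresponding coordinate of `p` and the uniform value `1/C` (same side,
smaller deviation), then `r` has at least the entropy of `p`. -/
theorem entropy_mono_pointwise_toward_uniform (C : ℕ) (hC : 2 ≤ C)
    (p r : Fin C → ℝ)
    (hp : ∀ i, 0 ≤ p i) (hpsum : ∑ i, p i = 1)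
    (hr : ∀ i, 0 ≤ r i) (hrsum : ∑ i, r i = 1)
    (hclose : ∀ i, |r i - 1 / C| ≤ |p i - 1 / C|)
    (hsign : ∀ i, 0 ≤ (r i - 1 / C) * (p i - 1 / C)) :
    ∑ i, -(p i) * Real.log (p i) ≤ ∑ i, -(r i) * Real.log (r i) := by
  have hC0 : (0:ℝ) < (C:ℝ) := by
    have : (2:ℝ) ≤ (C:ℝ) := by exact_mod_cast hC
    linarith
  set u : ℝ := 1 / (C:ℝ) with hu
  have hu0 : 0 < u := by positivity
  -- if r i = 0 then p i = 0
  have key : ∀ i, r i = 0 → p i = 0 := by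
    intro i h0
    have hs := hsign i
    have hc := hclose i
    rw [h0] at hs hc
    have hpu : p i - u ≤ 0 := by nlinarith
    rw [abs_of_neg (by linarith : (0:ℝ) - u < 0), abs_of_nonpos hpu] at hc
    have := hp i
    linarith
  -- p i ≤ r i when r i < u, and r i ≤ p i when u < r i
  have hle : ∀ i, r i < u → p i ≤ r i := by
    intro i h
    have hs := hsign i
    have hc := hclose i
    have hpu : p i - u ≤ 0 := by nlinarith
    rw [abs_of_neg (by linarith : r i - u < 0), abs_of_nonpos hpu] at hc
    linarith
  have hge : ∀ i, u < r i → r i ≤ p i := by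
    intro i h
    have hs := hsign i
    have hc := hclose i
    have hpu : 0 ≤ p i - u := by nlinarith
    rw [abs_of_pos (by linarith : 0 < r i - u), abs_of_nonneg hpu] at hc
    linarith
  -- Step 1: Gibbs-type inequality per coordinate
  have step1 : ∀ i ∈ Finset.univ, -(p i) * Real.log (p i) ≤
      (-(p i) * Real.log (r i) + (r i - p i)) := by
    intro i _
    rcases eq_or_lt_of_le (hp i) with h0 | h0
    · rw [← h0]
      simp [hr i]
    · have hri : 0 < r i := by
        rcases eq_or_lt_of_le (hr i) with h1 | h1
        · exact absurd (key i h1.symm) (ne_of_gt h0)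
        · exact h1
      have hlog := Real.log_le_sub_one_of_pos (show 0 < r i / p i by positivity)
      rw [Real.log_div (ne_of_gt hri) (ne_of_gt h0)] at hlog
      have h2 : p i * (Real.log (r i) - Real.log (p i)) ≤ p i * (r i / p i - 1) :=
        mul_le_mul_of_nonneg_left hlog h0.le
      have h3 : p i * (r i / p i - 1) = r i - p i := by field_simp
      nlinarith [h2, h3]
  -- Step 2: (r i - p i) * log (r i) ≤ (r i - p i) * log u
  have step2 : ∀ i ∈ Finset.univ, (r i - p i) * Real.log (r i) ≤
      (r i - p i) * Real.log u := by
    intro i _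
    rcases lt_trichotomy (r i) u with h | h | h
    · rcases eq_or_lt_of_le (hr i) with h1 | h1
      · have := key i h1.symm
        rw [← h1, this]
        simp
      · have hl : Real.log (r i) ≤ Real.log u := Real.log_le_log h1 h.le
        have hrp : 0 ≤ r i - p i := by linarith [hle i h]
        exact mul_le_mul_of_nonneg_left hl hrp
    · rw [h]
    · have hl : Real.log u ≤ Real.log (r i) := Real.log_le_log hu0 h.le
      have hrp : r i - p i ≤ 0 := by linarith [hge i h]
      exact mul_le_mul_of_nonpos_left hl hrp
  have s1 := Finset.sum_le_sum step1
  have s2 := Finset.sum_le_sum step2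
  have e1 : ∑ i, (-(p i) * Real.log (r i) + (r i - p i)) =
      ∑ i, -(p i) * Real.log (r i) := by
    rw [Finset.sum_add_distrib, Finset.sum_sub_distrib, hrsum, hpsum]
    ring
  have e2 : ∑ i, (r i - p i) * Real.log u = 0 := by
    rw [← Finset.sum_mul, Finset.sum_sub_distrib, hrsum, hpsum]
    ring
  have e3 : ∑ i, -(r i) * Real.log (r i) =
      ∑ i, -(p i) * Real.log (r i) - ∑ i, (r i - p i) * Real.log (r i) := by
    rw [← Finset.sum_sub_distrib]
    apply Finset.sum_congr rfl
    intro i _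
    ring
  linarith
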